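/- Let T be a Boolean decision tree over a finite set X of Boolean features satisfying the read-once property (on no root-to-leaf path do two internal nodes carry the same feature). Let f : X → Bool be an entity and x ∈ X. Then x is necessary for the prediction T(f) (i.e., x belongs to every sufficient reason for T(f)) if and only if the root-to-leaf path traversed when T evaluates f contains an internal node labeled x whose two subtrees evaluate to different values on f. -/
import Mathlib


/-- A Boolean decision tree over Boolean features `X`: leaves carry a Boolean label,
internal nodes carry a feature together with the subtree followed when the feature is
`true` and the subtree followed when it is `false`. -/
inductive DTree (X : Type*) where
  | leaf : Bool → DTree X
  | node : X → DTree X → DTree X → DTree X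

namespace DTree

/-- Evaluation of a decision tree on an entity `f : X → Bool`. -/
def eval {X : Type*} : DTree X → (X → Bool) → Bool
  | .leaf b, _ => b
  | .node x t₁ t₀, f => if f x then t₁.eval f else t₀.eval f

/-- The set of features appearing in a decision tree. -/
def vars {X : Type*} : DTree X → Set X
  | .leaf _ => ∅
  | .node x t₁ t₀ => {x} ∪ t₁.vars ∪ t₀.vars

/-- The read-once property: on no root-to-leaf path do two internal nodes carry the same
feature, i.e. the feature of each internal node does not reappear in its subtrees. -/
def ReadOnce {X : Type*} : DTree X → Prop
  | .leaf _ => True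
  | .node x t₁ t₀ => x ∉ t₁.vars ∧ x ∉ t₀.vars ∧ t₁.ReadOnce ∧ t₀.ReadOnce

/-- The root-to-leaf path traversed when evaluating `f` contains an internal node
labeled `x` whose two subtrees evaluate to different values on `f`. -/
def PathWitness {X : Type*} : DTree X → (X → Bool) → X → Prop
  | .leaf _, _, _ => False
  | .node y t₁ t₀, f, x =>
      (y = x ∧ t₁.eval f ≠ t₀.eval f) ∨
        (if f y then t₁.PathWitness f x else t₀.PathWitness f x)

end DTree

/-- `S` is a reason for the prediction `M f` of a Boolean model over Boolean features:
every entity agreeing with `f` on `S` gets the same prediction. -/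
def IsReason {X : Type*} (M : (X → Bool) → Bool) (f : X → Bool) (S : Set X) : Prop :=
  ∀ f' : X → Bool, (∀ x ∈ S, f' x = f x) → M f' = M f

/-- `S` is a sufficient reason: a reason that is minimal with respect to being a reason. -/
def IsSufficientReason {X : Type*} (M : (X → Bool) → Bool) (f : X → Bool) (S : Set X) :
    Prop :=
  IsReason M f S ∧ ∀ S' ⊂ S, ¬ IsReason M f S'

namespace DTree

lemma eval_congr {X : Type*} (T : DTree X) {f f' : X → Bool}
    (h : ∀ z ∈ T.vars, f' z = f z) : T.eval f' = T.eval f := by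
  induction T with
  | leaf b => rfl
  | node y t₁ t₀ ih₁ ih₀ =>
    have hy : f' y = f y := h y (Or.inl (Or.inl rfl))
    simp only [eval, hy]
    by_cases hfy : f y
    · simp [hfy, ih₁ fun z hz => h z (Or.inl (Or.inr hz))]
    · simp [hfy, ih₀ fun z hz => h z (Or.inr hz)]

lemma pathWitness_mem_vars {X : Type*} {T : DTree X} {f : X → Bool} {x : X}
    (h : T.PathWitness f x) : x ∈ T.vars := by
  induction T with
  | leaf b => exact absurd h id
  | node y t₁ t₀ ih₁ ih₀ =>
    rcases h with ⟨rfl, _⟩ | h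
    · exact Or.inl (Or.inl rfl)
    · by_cases hfy : f y
      · rw [if_pos hfy] at h; exact Or.inl (Or.inr (ih₁ h))
      · rw [if_neg hfy] at h; exact Or.inr (ih₀ h)

lemma flip_lemma {X : Type*} [DecidableEq X] {T : DTree X} (hT : T.ReadOnce)
    {f : X → Bool} {x : X} (h : T.PathWitness f x) :
    T.eval (Function.update f x (!f x)) ≠ T.eval f := by
  induction T with
  | leaf b => exact absurd h id
  | node y t₁ t₀ ih₁ ih₀ =>
    obtain ⟨h1, h0, hr1, hr0⟩ := hT
    set f' := Function.update f x (!f x) with hf'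
    have hoff : ∀ z, z ≠ x → f' z = f z := fun z hz => Function.update_of_ne hz _ _
    rcases h with ⟨rfl, hne⟩ | h
    · have hfx : f' y = !f y := Function.update_self _ _ _
      simp only [eval, hfx]
      by_cases hfy : f y
      · simp only [hfy, Bool.not_true, if_false, if_true]
        rw [eval_congr t₀ (fun z hz => hoff z (fun he => h0 (he ▸ hz)))]
        exact fun he => hne he.symm
      · simp only [hfy, Bool.not_false, if_true, if_false]
        rw [eval_congr t₁ (fun z hz => hoff z (fun he => h1 (he ▸ hz)))]
        exact hne
    · by_cases hfy : f y
      · rw [if_pos hfy] at h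
        have hxy : y ≠ x := fun he => h1 (he ▸ pathWitness_mem_vars h)
        have : f' y = f y := hoff y hxy
        simp only [eval, this, hfy, if_true]
        exact ih₁ hr1 h
      · rw [if_neg hfy] at h
        have hxy : y ≠ x := fun he => h0 (he ▸ pathWitness_mem_vars h)
        have : f' y = f y := hoff y hxy
        simp only [eval, this, hfy, if_false]
        exact ih₀ hr0 h

lemma exists_reason_avoiding {X : Type*} {T : DTree X} (hT : T.ReadOnce)
    {f : X → Bool} {x : X} (h : ¬ T.PathWitness f x) :
    ∃ S : Set X, IsReason T.eval f S ∧ x ∉ S := by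
  induction T with
  | leaf b => exact ⟨∅, fun f' _ => rfl, fun hx => hx⟩
  | node y t₁ t₀ ih₁ ih₀ =>
    obtain ⟨h1, h0, hr1, hr0⟩ := hT
    simp only [PathWitness, not_or] at h
    obtain ⟨hroot, hsub⟩ := h
    by_cases hxy : y = x
    · subst hxy
      have heq : t₁.eval f = t₀.eval f := by
        by_contra hne; exact hroot ⟨rfl, hne⟩
      obtain ⟨S₁, hS₁, hx₁⟩ := ih₁ hr1
        (fun hw => h1 (pathWitness_mem_vars hw))
      obtain ⟨S₀, hS₀, hx₀⟩ := ih₀ hr0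
        (fun hw => h0 (pathWitness_mem_vars hw))
      refine ⟨S₁ ∪ S₀, ?_, fun hx => hx.elim hx₁ hx₀⟩
      intro f' hf'
      have e1 : t₁.eval f' = t₁.eval f := hS₁ f' fun z hz => hf' z (Or.inl hz)
      have e0 : t₀.eval f' = t₀.eval f := hS₀ f' fun z hz => hf' z (Or.inr hz)
      simp only [eval, e1, e0, heq]
      by_cases hy : f' y <;> by_cases hy2 : f y <;> simp [hy, hy2]
    · by_cases hfy : f y
      · rw [if_pos hfy] at hsub
        obtain ⟨S₁, hS₁, hx₁⟩ := ih₁ hr1 hsub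
        refine ⟨insert y S₁, ?_, ?_⟩
        · intro f' hf'
          have hy : f' y = f y := hf' y (Set.mem_insert y S₁)
          simp only [eval, hy, hfy, if_true]
          exact hS₁ f' fun z hz => hf' z (Set.mem_insert_of_mem _ hz)
        · intro hx
          rcases hx with rfl | hx
          · exact hxy rfl
          · exact hx₁ hx
      · rw [if_neg hfy] at hsub
        obtain ⟨S₀, hS₀, hx₀⟩ := ih₀ hr0 hsub
        refine ⟨insert y S₀, ?_, ?_⟩
        · intro f' hf'
          have hy : f' y = f y := hf' y (Set.mem_insert y S₀)
          simp only [eval, hy, hfy, if_false]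
          exact hS₀ f' fun z hz => hf' z (Set.mem_insert_of_mem _ hz)
        · intro hx
          rcases hx with rfl | hx
          · exact hxy rfl
          · exact hx₀ hx

end DTree

lemma exists_sufficient_subset {X : Type*} [Finite X] (M : (X → Bool) → Bool)
    (f : X → Bool) : ∀ n (S : Set X), S.ncard = n → IsReason M f S →
    ∃ S' ⊆ S, IsSufficientReason M f S' := by
  intro n
  induction n using Nat.strong_induction_on with
  | _ n ih =>
    intro S hcard hS
    by_cases h : ∀ S' ⊂ S, ¬ IsReason M f S'
    · exact ⟨S, subset_rfl, hS, h⟩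
    · push_neg at h
      obtain ⟨S', hss, hS'⟩ := h
      obtain ⟨S'', h1, h2⟩ := ih S'.ncard
        (hcard ▸ Set.ncard_lt_ncard hss S.toFinite) S' rfl hS'
      exact ⟨S'', h1.trans hss.subset, h2⟩

/-- For a read-once Boolean decision tree `T`, a feature `x` is necessary for the
prediction `T f` (it belongs to every sufficient reason) iff the path traversed when
evaluating `f` contains a node labeled `x` whose two subtrees evaluate to different
values on `f`. -/
theorem necessary_iff_pathWitness
    {X : Type*} [Finite X] (T : DTree X) (hT : T.ReadOnce) (f : X → Bool) (x : X) :
    (∀ S : Set X, IsSufficientReason T.eval f S → x ∈ S) ↔ T.PathWitness f x := by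
  classical
  constructor
  · intro h
    by_contra hw
    obtain ⟨S, hS, hxS⟩ := DTree.exists_reason_avoiding hT hw
    obtain ⟨S', hsub, hsuf⟩ := exists_sufficient_subset T.eval f S.ncard S rfl hS
    exact hxS (hsub (h S' hsuf))
  · intro hw S hS
    by_contra hxS
    have := hS.1 (Function.update f x (!f x))
      (fun z hz => Function.update_of_ne (fun he : z = x => hxS (he ▸ hz)) _ _)
    exact DTree.flip_lemma hT hw this
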